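/- arXiv:2109.10551 — 6 statements merged into one kernel-verified Lean document; each statement's English description precedes it below -/
import Mathlib

section
/- Let m and n be integers with 1 ≤ m ≤ n, let l ≥ 0 be an integer, and let U = (u_{st}) be an m×n matrix of independent indeterminates over ℂ. Suppose Q(U) is a polynomial in the entries of U such that for every B ∈ GL_m(ℂ) the polynomial obtained from Q by the substitution U ↦ BU (i.e. u_{st} ↦ Σ_{p=1}^m b_{sp} u_{pt}) equals det(B)^l · Q(U). Then Q(U) is a ℂ-linear combination of products ∏_{i=1}^{l} U_{I_i}, where each I_i is a subset of {1,…,n} of cardinality m and U_{I_i} is the corresponding maximal (m×m) minor of U. -/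
open MvPolynomial

/-- The maximal (`m × m`) minor of the `m × n` matrix of indeterminates `U = (X (s,t))`
on the columns indexed by `J : Fin m → Fin n` (listed in increasing order when `J` is
strictly monotone). -/
noncomputable def maxMinor (m n : ℕ) (J : Fin m → Fin n) : MvPolynomial (Fin m × Fin n) ℂ :=
  Matrix.det (Matrix.of fun s t : Fin m => X (s, J t))

namespace FFTProof

open Finset

variable (m n l : ℕ)

/-- The polynomial ring in the entries of `U`. -/
abbrev Rng (m n : ℕ) := MvPolynomial (Fin m × Fin n) ℂ

/-- The polynomial ring in the entries of an auxiliary `m × m` matrix `Y` together with the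
entries of `U`. -/
abbrev Tng (m n : ℕ) := MvPolynomial ((Fin m × Fin m) ⊕ (Fin m × Fin n)) ℂ

/-- The determinant of the generic matrix `Y`. -/
noncomputable def Ydet : Tng m n :=
  Matrix.det (Matrix.of fun p q : Fin m => (X (Sum.inl (p, q)) : Tng m n))

/-- The substitution `u_{st} ↦ ∑_p y_{sp} u_{pt}`. -/
noncomputable def fs : Fin m × Fin n → Tng m n := fun st =>
  ∑ p : Fin m, X (Sum.inl (st.1, p)) * X (Sum.inr (p, st.2))

/-- The target span: linear combinations of products of `l` maximal minors. -/
noncomputable def Mspan (m n l : ℕ) : Submodule ℂ (Rng m n) :=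
  Submodule.span ℂ
    { P : MvPolynomial (Fin m × Fin n) ℂ |
      ∃ J : Fin l → Fin m → Fin n, (∀ i, StrictMono (J i)) ∧
        P = ∏ i, maxMinor m n (J i) }

/-- The exponent multi-index attached to an `l`-tuple of permutations. -/
noncomputable def bfun (σ : Fin l → Equiv.Perm (Fin m)) : (Fin m × Fin m) →₀ ℕ :=
  ∑ i, ∑ p, Finsupp.single (σ i p, p) 1

/-- The sign of an `l`-tuple of permutations. -/
def sgnv (σ : Fin l → Equiv.Perm (Fin m)) : ℤ :=
  ∏ i, (Equiv.Perm.sign (σ i) : ℤ)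

/-- Product of factorials of the entries of a multi-index. -/
noncomputable def fct (b : (Fin m × Fin m) →₀ ℕ) : ℕ :=
  ∏ c : Fin m × Fin m, (b c).factorial

/-- The "Cayley Ω-process"-style extraction operator. -/
noncomputable def PhiL : Tng m n →ₗ[ℂ] Rng m n where
  toFun P := ∑ σ : Fin l → Equiv.Perm (Fin m),
    (((sgnv m l σ * fct m (bfun m l σ) : ℤ) : ℂ)) •
      coeff (bfun m l σ) (sumToIter ℂ _ _ P)
  map_add' P P' := by
    simp [map_add, coeff_add, smul_add, Finset.sum_add_distrib]
  map_smul' c P := by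
    simp only [RingHom.id_apply, Finset.smul_sum]
    refine Finset.sum_congr rfl fun σ _ => ?_
    have h : (c • P : Tng m n) = C c * P := smul_eq_C_mul P c
    rw [h, map_mul, sumToIter_C, coeff_C_mul]
    simp only [smul_eq_C_mul]
    ring

theorem aeval_self_eq_eval {τ : Type*} (x : τ → ℂ) (p : MvPolynomial τ ℂ) :
    (aeval x : MvPolynomial τ ℂ →ₐ[ℂ] ℂ) p = eval x p := rfl

theorem Ydet_ne_zero : Ydet m n ≠ 0 := by
  have h2 := RingHom.map_det
    ((rename (R := ℂ) (Sum.inl : Fin m × Fin m → (Fin m × Fin m) ⊕ (Fin m × Fin n))).toRingHom)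
    (Matrix.mvPolynomialX (Fin m) (Fin m) ℂ)
  have hM : (Matrix.of fun p q : Fin m => (X (Sum.inl (p, q)) : Tng m n))
      = (Matrix.mvPolynomialX (Fin m) (Fin m) ℂ).map (rename (R := ℂ) Sum.inl) := by
    ext p q
    simp [Matrix.mvPolynomialX]
  have h : Ydet m n = rename Sum.inl ((Matrix.mvPolynomialX (Fin m) (Fin m) ℂ).det) := by
    rw [Ydet, hM]
    exact h2.symm
  rw [h]
  intro hc
  apply Matrix.det_mvPolynomialX_ne_zero (Fin m) (R := ℂ)
  have hinj := rename_injective (R := ℂ)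
    (Sum.inl : Fin m × Fin m → (Fin m × Fin m) ⊕ (Fin m × Fin n)) Sum.inl_injective
  apply hinj
  simpa using hc

theorem master (Q : MvPolynomial (Fin m × Fin n) ℂ)
    (hQ : ∀ B : Matrix (Fin m) (Fin m) ℂ, IsUnit B.det →
      aeval (fun st : Fin m × Fin n => ∑ p : Fin m, C (B st.1 p) * X (p, st.2)) Q
        = C (B.det ^ l) * Q) :
    aeval (fs m n) Q = Ydet m n ^ l * rename Sum.inr Q := by
  have hY := Ydet_ne_zero m n
  have key : Ydet m n * aeval (fs m n) Q
      = Ydet m n * (Ydet m n ^ l * rename Sum.inr Q) := by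
    apply MvPolynomial.funext
    intro x
    set B : Matrix (Fin m) (Fin m) ℂ := Matrix.of fun p q : Fin m => x (Sum.inl (p, q)) with hBdef
    have hB : eval x (Ydet m n) = B.det := by
      rw [Ydet, RingHom.map_det]
      congr 1
      ext p q
      simp [hBdef]
    have h1 : eval x (aeval (fs m n) Q)
        = aeval (fun st : Fin m × Fin n => ∑ p : Fin m, B st.1 p * x (Sum.inr (p, st.2))) Q := by
      rw [← aeval_self_eq_eval]
      have hcomp := MvPolynomial.comp_aeval (φ := (aeval x : Tng m n →ₐ[ℂ] ℂ)) (f := fs m n)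
      have h' := congrArg (fun (φ : MvPolynomial (Fin m × Fin n) ℂ →ₐ[ℂ] ℂ) => φ Q) hcomp
      simp only [AlgHom.comp_apply] at h'
      have hfun : (fun i => (aeval x) (fs m n i))
          = fun st : Fin m × Fin n => ∑ p : Fin m, B st.1 p * x (Sum.inr (p, st.2)) := by
        funext st
        simp [fs, hBdef]
      rw [h', hfun]
    have h2 : eval x (rename (Sum.inr : Fin m × Fin n → _) Q) = eval (x ∘ Sum.inr) Q := by
      rw [eval_rename]
    simp only [map_mul, map_pow, hB, h1, h2]
    by_cases hdet : B.det = 0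
    · rw [hdet]; ring
    · have hu : IsUnit B.det := isUnit_iff_ne_zero.mpr hdet
      have hinv := hQ B hu
      have hev := congrArg (eval (x ∘ Sum.inr)) hinv
      simp only [map_mul, eval_C] at hev
      have hL : eval (x ∘ Sum.inr)
          (aeval (fun st : Fin m × Fin n => ∑ p : Fin m, C (B st.1 p) * X (p, st.2)) Q)
          = aeval (fun st : Fin m × Fin n => ∑ p : Fin m, B st.1 p * x (Sum.inr (p, st.2))) Q := by
        rw [← aeval_self_eq_eval]
        have hcomp := MvPolynomial.comp_aeval
          (φ := (aeval (x ∘ Sum.inr) : MvPolynomial (Fin m × Fin n) ℂ →ₐ[ℂ] ℂ))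
          (f := fun st : Fin m × Fin n => ∑ p : Fin m, C (B st.1 p) * X (p, st.2))
        have h' := congrArg (fun (φ : MvPolynomial (Fin m × Fin n) ℂ →ₐ[ℂ] ℂ) => φ Q) hcomp
        simp only [AlgHom.comp_apply] at h'
        have hfun : (fun i => (aeval (x ∘ Sum.inr))
              ((fun st : Fin m × Fin n => ∑ p : Fin m, C (B st.1 p) * X (p, st.2)) i))
            = fun st : Fin m × Fin n => ∑ p : Fin m, B st.1 p * x (Sum.inr (p, st.2)) := by
          funext st
          simp
        rw [h', hfun]
      rw [hL] at hev
      rw [hev]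
  exact mul_left_cancel₀ hY key

/-- products of `X`'s are monomials -/
theorem prod_X_monomial {R : Type*} [CommSemiring R] {τ : Type*} {d : ℕ} (v : Fin d → τ) :
    (∏ j, (X (v j) : MvPolynomial τ R)) =
      monomial (∑ j, Finsupp.single (v j) 1) (1 : R) := by
  induction d with
  | zero => simp [monomial_zero']
  | succ d ih =>
    rw [Fin.prod_univ_succ, Fin.sum_univ_succ, ih, X, monomial_mul, one_mul]

/-- counting lemma: the number of fiberwise-compatible bijections. -/
theorem count_lemma {A B C : Type*} [Fintype A] [Fintype B] [Fintype C] [DecidableEq A]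
    [DecidableEq B] [DecidableEq C] (ψ : A → C) (φ : B → C) :
    Fintype.card {w : A ≃ B // ∀ a, φ (w a) = ψ a} =
      if (∀ c, Fintype.card {a // ψ a = c} = Fintype.card {b // φ b = c})
        then ∏ c : C, (Fintype.card {a // ψ a = c}).factorial else 0 := by
  -- the subtype of compatible bijections is equivalent to fiberwise bijections
  have e : {w : A ≃ B // ∀ a, φ (w a) = ψ a} ≃ (∀ c, {a // ψ a = c} ≃ {b // φ b = c}) := by
    refine
      { toFun := fun w c => Equiv.subtypeEquiv w.1 (fun a => ?_)
        invFun := fun F => ⟨Equiv.ofFiberEquiv (f := ψ) (g := φ) F,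
          fun a => Equiv.ofFiberEquiv_map F a⟩
        left_inv := ?_
        right_inv := ?_ }
    · constructor
      · intro h; rw [w.2 a, h]
      · intro h; rw [← w.2 a, h]
    · intro w
      ext a
      simp [Equiv.ofFiberEquiv]
    · intro F
      ext c a
      obtain ⟨a0, ha⟩ := a
      subst ha
      simp [Equiv.ofFiberEquiv, Equiv.subtypeEquiv, Equiv.sigmaFiberEquiv]
  rw [Fintype.card_congr e]
  rw [Fintype.card_pi]
  by_cases h : ∀ c, Fintype.card {a // ψ a = c} = Fintype.card {b // φ b = c}
  · rw [if_pos h]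
    refine Finset.prod_congr rfl fun c _ => ?_
    rw [Fintype.card_equiv (Fintype.equivOfCardEq (h c))]
  · rw [if_neg h]
    push_neg at h
    obtain ⟨c, hc⟩ := h
    apply Finset.prod_eq_zero (Finset.mem_univ c)
    have : IsEmpty ({a // ψ a = c} ≃ {b // φ b = c}) :=
      ⟨fun e => hc (Fintype.card_congr e)⟩
    exact Fintype.card_eq_zero

theorem card_fiber_eq {A : Type*} [Fintype A] [DecidableEq A] (f : A → Fin m × Fin m)
    (c : Fin m × Fin m) :
    Fintype.card {a // f a = c}
      = (∑ a : A, Finsupp.single (f a) 1 : (Fin m × Fin m) →₀ ℕ) c := by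
  rw [Finsupp.finset_sum_apply, Fintype.card_subtype]
  rw [show (∑ a : A, (Finsupp.single (f a) 1 : (Fin m × Fin m) →₀ ℕ) c)
      = ∑ a : A, if f a = c then 1 else 0 from
    Finset.sum_congr rfl fun a _ => Finsupp.single_apply]
  rw [← Finset.sum_filter, Finset.card_eq_sum_ones]

theorem bfun_eq_sum_prod (σ : Fin l → Equiv.Perm (Fin m)) :
    bfun m l σ = ∑ ip : Fin l × Fin m, Finsupp.single (σ ip.1 ip.2, ip.2) 1 := by
  rw [bfun, Fintype.sum_prod_type]

/-- The column-exponent of a `U`-monomial. -/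
noncomputable def gam (d : ℕ) (s ρ : Fin d → Fin m) : (Fin m × Fin m) →₀ ℕ :=
  ∑ j, Finsupp.single (s j, ρ j) 1

theorem count_eq (d : ℕ) (s ρ : Fin d → Fin m) (σ : Fin l → Equiv.Perm (Fin m)) :
    (if gam m d s ρ = bfun m l σ then (fct m (bfun m l σ)) else 0)
      = Fintype.card {w : (Fin l × Fin m) ≃ Fin d //
          ∀ ip : Fin l × Fin m,
            (fun j => (s j, ρ j)) (w ip)
              = (fun ip : Fin l × Fin m => (σ ip.1 ip.2, ip.2)) ip} := by
  rw [count_lemma (ψ := fun ip : Fin l × Fin m => (σ ip.1 ip.2, ip.2))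
    (φ := fun j => (s j, ρ j))]
  have hψ : ∀ c, Fintype.card
      {a : Fin l × Fin m // (fun ip : Fin l × Fin m => (σ ip.1 ip.2, ip.2)) a = c}
      = bfun m l σ c := by
    intro c
    rw [card_fiber_eq m (fun ip : Fin l × Fin m => (σ ip.1 ip.2, ip.2)) c, bfun_eq_sum_prod]
  have hφ : ∀ c, Fintype.card {b : Fin d // (fun j => (s j, ρ j)) b = c}
      = gam m d s ρ c := by
    intro c
    rw [card_fiber_eq m (fun j => (s j, ρ j)) c, gam]
  by_cases h : gam m d s ρ = bfun m l σ
  · rw [if_pos h, if_pos, fct]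
    · refine Finset.prod_congr rfl fun c _ => ?_
      rw [hψ c]
    · intro c
      rw [hψ c, hφ c, h]
  · rw [if_neg h, if_neg]
    intro hc
    apply h
    ext c
    rw [← hφ c, ← hψ c]
    exact (hc c).symm

/-- Products of (not necessarily monotone) maximal minors lie in the span. -/
theorem prod_maxMinor_mem (hmn : m ≤ n) (c : Fin l → Fin m → Fin n) :
    (∏ i, maxMinor m n (c i)) ∈ Mspan m n l := by
  have hchoice : ∀ i : Fin l, ∃ (z : ℂ) (J : Fin m → Fin n), StrictMono J ∧
      maxMinor m n (c i) = z • maxMinor m n J := by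
    intro i
    by_cases hinj : Function.Injective (c i)
    · set σ := Tuple.sort (c i) with hσ
      have hmono : Monotone (c i ∘ σ) := Tuple.monotone_sort (c i)
      have hsm : StrictMono (c i ∘ σ) :=
        hmono.strictMono_of_injective (hinj.comp σ.injective)
      refine ⟨((Equiv.Perm.sign σ : ℤ) : ℂ), c i ∘ σ, hsm, ?_⟩
      have hperm : maxMinor m n (c i ∘ σ)
          = ((Equiv.Perm.sign σ : ℤ) : ℂ) • maxMinor m n (c i) := by
        have h1 : maxMinor m n (c i ∘ σ)
            = ((Matrix.of fun s t : Fin m => (X (s, c i t) : Rng m n)).submatrix id σ).det := by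
          rfl
        rw [h1, Matrix.det_permute', maxMinor, smul_eq_C_mul,
          ← map_intCast (C : ℂ →+* Rng m n) ((Equiv.Perm.sign σ : ℤ))]
      rw [hperm, smul_smul]
      have hs : ((Equiv.Perm.sign σ : ℤ) : ℂ) * ((Equiv.Perm.sign σ : ℤ) : ℂ) = 1 := by
        rcases Int.units_eq_one_or (Equiv.Perm.sign σ) with h | h <;> rw [h] <;> norm_num
      rw [hs, one_smul]
    · rw [Function.not_injective_iff] at hinj
      obtain ⟨a, b, hab, hne⟩ := hinj
      refine ⟨0, Fin.castLE hmn, Fin.strictMono_castLE hmn, ?_⟩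
      rw [zero_smul, maxMinor]
      apply Matrix.det_zero_of_column_eq hne
      intro k
      simp [hab]
  choose z J hJ hzJ using hchoice
  rw [Finset.prod_congr rfl (fun i _ => hzJ i)]
  have hsmul : (∏ i, z i • maxMinor m n (J i))
      = (∏ i, z i) • ∏ i, maxMinor m n (J i) := by
    simp only [smul_eq_C_mul]
    rw [Finset.prod_mul_distrib, map_prod]
  rw [hsmul]
  apply Submodule.smul_mem
  apply Submodule.subset_span
  exact ⟨J, hJ, rfl⟩

/-- alternating sum over permutations is a maximal minor -/
theorem sum_perm_eq_maxMinor (v : Fin m → Fin n) :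
    (∑ g : Equiv.Perm (Fin m),
      ((Equiv.Perm.sign g : ℤ) : Rng m n) * ∏ p, (X (p, v (g p)) : Rng m n))
      = maxMinor m n v := by
  have h1 : ∀ g : Equiv.Perm (Fin m), (∏ p, (X (p, v (g p)) : Rng m n))
      = ∏ q, (X (g⁻¹ q, v q) : Rng m n) := by
    intro g
    exact Fintype.prod_equiv g (fun p => (X (p, v (g p)) : Rng m n))
      (fun q => (X (g⁻¹ q, v q) : Rng m n)) (fun p => by simp)
  calc (∑ g : Equiv.Perm (Fin m),
      ((Equiv.Perm.sign g : ℤ) : Rng m n) * ∏ p, (X (p, v (g p)) : Rng m n))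
      = ∑ g : Equiv.Perm (Fin m),
        ((Equiv.Perm.sign g : ℤ) : Rng m n) * ∏ q, (X (g⁻¹ q, v q) : Rng m n) :=
      Finset.sum_congr rfl fun g _ => by rw [h1 g]
    _ = ∑ g : Equiv.Perm (Fin m),
        ((Equiv.Perm.sign g : ℤ) : Rng m n) * ∏ q, (X (g q, v q) : Rng m n) :=
      (Fintype.sum_equiv (Equiv.inv (Equiv.Perm (Fin m)))
        (fun g => ((Equiv.Perm.sign g : ℤ) : Rng m n) * ∏ q, (X (g q, v q) : Rng m n))
        (fun g => ((Equiv.Perm.sign g : ℤ) : Rng m n) * ∏ q, (X (g⁻¹ q, v q) : Rng m n))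
        (fun g => by simp)).symm
    _ = maxMinor m n v := by
      rw [maxMinor, Matrix.det_apply']
      exact Finset.sum_congr rfl fun g _ => rfl

/-- re-indexing a variable product along a bijection -/
theorem prod_X_reindex (d : ℕ) (t : Fin d → Fin n) (w : (Fin l × Fin m) ≃ Fin d) :
    (∏ j, (X ((w.symm j).2, t j) : Rng m n))
      = ∏ ip : Fin l × Fin m, (X (ip.2, t (w ip)) : Rng m n) := by
  rw [← Equiv.prod_comp w (fun j => (X ((w.symm j).2, t j) : Rng m n))]
  refine Finset.prod_congr rfl fun ip _ => ?_
  simp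

/-- The key computation: extraction of a product of substituted variables. -/
theorem phi_prod_mem (hmn : m ≤ n) (d : ℕ) (s : Fin d → Fin m) (t : Fin d → Fin n) :
    PhiL m n l (∏ j, fs m n (s j, t j)) ∈ Mspan m n l := by
  classical
  -- the finsets of compatible bijections
  set W : (Fin l → Equiv.Perm (Fin m)) → Finset ((Fin l × Fin m) ≃ Fin d) :=
    fun σ => Finset.univ.filter
      (fun w : (Fin l × Fin m) ≃ Fin d => ∀ ip : Fin l × Fin m, s (w ip) = σ ip.1 ip.2)
    with hW
  -- Step 1 : expand the product of sums
  have h1 : (∏ j, fs m n (s j, t j))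
      = ∑ ρ : Fin d → Fin m,
          ∏ j, ((X (Sum.inl (s j, ρ j)) * X (Sum.inr (ρ j, t j))) : Tng m n) := by
    rw [show (∏ j, fs m n (s j, t j))
        = ∏ j, ∑ p : Fin m, ((X (Sum.inl (s j, p)) * X (Sum.inr (p, t j))) : Tng m n) from
      rfl, Finset.prod_univ_sum, Fintype.piFinset_univ]
  -- Step 2 : image under sumToIter
  have h2 : ∀ ρ : Fin d → Fin m,
      sumToIter ℂ (Fin m × Fin m) (Fin m × Fin n)
        (∏ j, ((X (Sum.inl (s j, ρ j)) * X (Sum.inr (ρ j, t j))) : Tng m n))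
      = monomial (gam m d s ρ) (1 : Rng m n) * C (∏ j, (X (ρ j, t j) : Rng m n)) := by
    intro ρ
    rw [map_prod]
    simp only [map_mul, sumToIter_Xl, sumToIter_Xr]
    rw [Finset.prod_mul_distrib, prod_X_monomial, ← map_prod (C : Rng m n →+* _)]
    rfl
  -- Step 3 : the coefficient extraction
  have h3 : PhiL m n l (∏ j, fs m n (s j, t j))
      = ∑ σ : Fin l → Equiv.Perm (Fin m), ∑ ρ : Fin d → Fin m,
          (((sgnv m l σ * fct m (bfun m l σ) : ℤ) : ℂ)) •
            ((∏ j, (X (ρ j, t j) : Rng m n)) *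
              (if gam m d s ρ = bfun m l σ then (1 : Rng m n) else 0)) := by
    rw [h1, map_sum]
    simp only [show ∀ P, PhiL m n l P = ∑ σ : Fin l → Equiv.Perm (Fin m),
        (((sgnv m l σ * fct m (bfun m l σ) : ℤ) : ℂ)) •
          coeff (bfun m l σ) (sumToIter ℂ (Fin m × Fin m) (Fin m × Fin n) P) from fun _ => rfl]
    rw [Finset.sum_comm]
    refine Finset.sum_congr rfl fun σ _ => Finset.sum_congr rfl fun ρ _ => ?_
    rw [h2 ρ, mul_comm ((monomial (gam m d s ρ)) (1 : Rng m n))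
      (C (∏ j, (X (ρ j, t j) : Rng m n))), coeff_C_mul, coeff_monomial]
  -- Step 4 : turn scalars into a cardinality count
  have h4 : ∀ (σ : Fin l → Equiv.Perm (Fin m)) (ρ : Fin d → Fin m),
      (((sgnv m l σ * fct m (bfun m l σ) : ℤ) : ℂ)) •
        ((∏ j, (X (ρ j, t j) : Rng m n)) *
          (if gam m d s ρ = bfun m l σ then (1 : Rng m n) else 0))
      = ((sgnv m l σ : ℤ) : ℂ) •
          (((if gam m d s ρ = bfun m l σ then fct m (bfun m l σ) else 0 : ℕ)) •
            (∏ j, (X (ρ j, t j) : Rng m n))) := by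
    intro σ ρ
    by_cases h : gam m d s ρ = bfun m l σ
    · rw [if_pos h, if_pos h, mul_one]
      rw [← Nat.cast_smul_eq_nsmul ℂ, smul_smul]
      congr 1
      push_cast
      ring
    · rw [if_neg h, if_neg h, mul_zero, smul_zero, zero_smul, smul_zero]
  -- Step 5 : replace the count by a sum over compatible bijections
  have h5 : ∀ σ : Fin l → Equiv.Perm (Fin m),
      (∑ ρ : Fin d → Fin m,
        ((if gam m d s ρ = bfun m l σ then fct m (bfun m l σ) else 0 : ℕ)) •
          (∏ j, (X (ρ j, t j) : Rng m n)))
      = ∑ w ∈ W σ, ∏ ip : Fin l × Fin m, (X (ip.2, t (w ip)) : Rng m n) := by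
    intro σ
    have e1 : ∀ ρ : Fin d → Fin m,
        (if gam m d s ρ = bfun m l σ then fct m (bfun m l σ) else 0 : ℕ)
        = (Finset.univ.filter (fun w : (Fin l × Fin m) ≃ Fin d =>
            ∀ ip : Fin l × Fin m,
              (fun j => (s j, ρ j)) (w ip)
                = (fun ip : Fin l × Fin m => (σ ip.1 ip.2, ip.2)) ip)).card := by
      intro ρ
      rw [count_eq m l d s ρ σ, Fintype.card_subtype]
    have e2 : ∀ ρ : Fin d → Fin m,
        ((if gam m d s ρ = bfun m l σ then fct m (bfun m l σ) else 0 : ℕ)) •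
          (∏ j, (X (ρ j, t j) : Rng m n))
        = ∑ _w ∈ (Finset.univ.filter (fun w : (Fin l × Fin m) ≃ Fin d =>
            ∀ ip : Fin l × Fin m,
              (fun j => (s j, ρ j)) (w ip)
                = (fun ip : Fin l × Fin m => (σ ip.1 ip.2, ip.2)) ip)),
            (∏ j, (X (ρ j, t j) : Rng m n)) := by
      intro ρ
      rw [Finset.sum_const, e1 ρ]
    rw [Finset.sum_congr rfl fun ρ _ => e2 ρ, Finset.sum_sigma']
    refine Finset.sum_nbij' (i := fun a => a.2)
      (j := fun w => ⟨fun j => (w.symm j).2, w⟩) ?_ ?_ ?_ ?_ ?_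
    · rintro ⟨ρ, w⟩ ha
      rw [Finset.mem_sigma] at ha
      obtain ⟨-, hw⟩ := ha
      rw [Finset.mem_filter] at hw ⊢
      refine ⟨Finset.mem_univ _, fun ip => ?_⟩
      exact congrArg Prod.fst (hw.2 ip)
    · intro w hw
      rw [hW, Finset.mem_filter] at hw
      rw [Finset.mem_sigma]
      refine ⟨Finset.mem_univ _, ?_⟩
      rw [Finset.mem_filter]
      refine ⟨Finset.mem_univ _, fun ip => ?_⟩
      have h1' : s (w ip) = σ ip.1 ip.2 := hw.2 ip
      have h2' : (w.symm (w ip)).2 = ip.2 := by simp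
      simp [h1', h2']
    · rintro ⟨ρ, w⟩ ha
      rw [Finset.mem_sigma] at ha
      obtain ⟨-, hw⟩ := ha
      rw [Finset.mem_filter] at hw
      have hρ : (fun j => (w.symm j).2) = ρ := by
        funext j
        have := congrArg Prod.snd (hw.2 (w.symm j))
        simpa using this.symm
      simp only [hρ]
    · intro w hw
      rfl
    · rintro ⟨ρ, w⟩ ha
      rw [Finset.mem_sigma] at ha
      obtain ⟨-, hw⟩ := ha
      rw [Finset.mem_filter] at hw
      have hρ : ∀ j, ρ j = (w.symm j).2 := by
        intro j
        have := congrArg Prod.snd (hw.2 (w.symm j))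
        simpa using this
      show (∏ j, (X (ρ j, t j) : Rng m n))
          = ∏ ip : Fin l × Fin m, (X (ip.2, t (w ip)) : Rng m n)
      rw [Finset.prod_congr rfl fun j (_ : j ∈ Finset.univ) => by rw [hρ j]]
      exact prod_X_reindex m n l d t w
  -- Step 6 : reindex the compatible bijections to the base case σ = 1
  have h6 : ∀ σ : Fin l → Equiv.Perm (Fin m),
      (∑ w ∈ W σ, ∏ ip : Fin l × Fin m, (X (ip.2, t (w ip)) : Rng m n))
      = ∑ w ∈ W (fun _ => 1),
          ∏ ip : Fin l × Fin m, (X (ip.2, t (w (ip.1, σ ip.1 ip.2))) : Rng m n) := by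
    intro σ
    set eσ : (Fin l × Fin m) ≃ (Fin l × Fin m) :=
      Equiv.prodShear (Equiv.refl (Fin l)) σ with heσ
    have heσ_app : ∀ ip : Fin l × Fin m, eσ ip = (ip.1, σ ip.1 ip.2) := fun ip => rfl
    have heσ_symm : ∀ ip : Fin l × Fin m, eσ.symm ip = (ip.1, (σ ip.1)⁻¹ ip.2) :=
      fun ip => rfl
    refine Finset.sum_nbij' (i := fun w => eσ.symm.trans w) (j := fun w => eσ.trans w)
      ?_ ?_ ?_ ?_ ?_
    · intro w hw
      rw [hW, Finset.mem_filter] at hw ⊢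
      refine ⟨Finset.mem_univ _, fun ip => ?_⟩
      have := hw.2 (eσ.symm ip)
      rw [heσ_symm ip] at this
      simpa [heσ_symm] using this
    · intro w hw
      rw [hW, Finset.mem_filter] at hw ⊢
      refine ⟨Finset.mem_univ _, fun ip => ?_⟩
      have := hw.2 (eσ ip)
      rw [heσ_app ip] at this
      simpa [heσ_app] using this
    · intro w _
      ext ip
      simp
    · intro w _
      ext ip
      simp
    · intro w _
      refine Finset.prod_congr rfl fun ip _ => ?_
      congr 2
      simp [Equiv.trans_apply, heσ_symm, heσ_app]
  -- Step 7 : exchange the sums and recognize products of minors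
  have h8 : ∀ w : (Fin l × Fin m) ≃ Fin d,
      (∑ σ : Fin l → Equiv.Perm (Fin m), ((sgnv m l σ : ℤ) : ℂ) •
        ∏ ip : Fin l × Fin m, (X (ip.2, t (w (ip.1, σ ip.1 ip.2))) : Rng m n))
      = ∏ i : Fin l, maxMinor m n (fun q => t (w (i, q))) := by
    intro w
    have e3 : ∀ σ : Fin l → Equiv.Perm (Fin m),
        ((sgnv m l σ : ℤ) : ℂ) •
          (∏ ip : Fin l × Fin m, (X (ip.2, t (w (ip.1, σ ip.1 ip.2))) : Rng m n))
        = ∏ i : Fin l, (((Equiv.Perm.sign (σ i) : ℤ) : Rng m n) *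
            ∏ p : Fin m, (X (p, t (w (i, σ i p))) : Rng m n)) := by
      intro σ
      rw [Int.cast_smul_eq_zsmul, zsmul_eq_mul, Finset.prod_mul_distrib]
      congr 1
      · rw [sgnv]
        push_cast
        rfl
      · rw [Fintype.prod_prod_type]
    rw [Finset.sum_congr rfl fun σ _ => e3 σ]
    rw [← Fintype.piFinset_univ]
    rw [(Finset.prod_univ_sum (fun _ : Fin l => (Finset.univ : Finset (Equiv.Perm (Fin m))))
      (fun i g => ((Equiv.Perm.sign g : ℤ) : Rng m n)
        * ∏ p, (X (p, t (w (i, g p))) : Rng m n))).symm]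
    refine Finset.prod_congr rfl fun i _ => ?_
    exact sum_perm_eq_maxMinor m n (fun q => t (w (i, q)))
  -- assemble
  rw [h3, Finset.sum_congr rfl fun σ _ => Finset.sum_congr rfl fun ρ _ => h4 σ ρ]
  rw [Finset.sum_congr rfl fun σ _ => by
    rw [← Finset.smul_sum, h5 σ, h6 σ, Finset.smul_sum]]
  rw [Finset.sum_comm]
  apply Submodule.sum_mem
  intro w hw
  rw [h8 w]
  exact prod_maxMinor_mem m n l hmn (fun i q => t (w (i, q)))

theorem exists_monomial_eq_prod (μ : (Fin m × Fin n) →₀ ℕ) :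
    ∃ (d : ℕ) (v : Fin d → Fin m × Fin n),
      (monomial μ (1 : ℂ) : Rng m n) = ∏ j, X (v j) := by
  induction μ using Finsupp.induction with
  | zero => exact ⟨0, Fin.elim0, by simp [monomial_zero']⟩
  | single_add a k f ha hk ih =>
    obtain ⟨d, v, hv⟩ := ih
    refine ⟨k + d, Fin.append (fun _ => a) v, ?_⟩
    have hL : (monomial (Finsupp.single a k + f) (1 : ℂ) : Rng m n)
        = X a ^ k * monomial f 1 := by
      rw [X_pow_eq_monomial, monomial_mul, one_mul]
    rw [hL, hv, Fin.prod_univ_add]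
    congr 1
    · rw [Finset.prod_congr rfl fun (i : Fin k) _ => by
        rw [Fin.append_left (fun _ => a) v i]]
      rw [Finset.prod_const, Finset.card_univ, Fintype.card_fin]
    · exact Finset.prod_congr rfl fun (i : Fin d) _ => by
        rw [Fin.append_right (fun _ => a) v i]

/-- Part (b): the extraction of any substituted polynomial lies in the span. -/
theorem phi_subst_mem (Q : MvPolynomial (Fin m × Fin n) ℂ) (hmn : m ≤ n) :
    PhiL m n l (aeval (fs m n) Q) ∈ Mspan m n l := by
  classical
  rw [show Q = ∑ μ ∈ Q.support, monomial μ (coeff μ Q) from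
    (support_sum_monomial_coeff Q).symm]
  rw [map_sum, map_sum]
  apply Submodule.sum_mem
  intro μ _
  have hmono : (monomial μ (coeff μ Q) : Rng m n) = (coeff μ Q) • monomial μ (1 : ℂ) := by
    rw [smul_monomial, smul_eq_mul, mul_one]
  rw [hmono, map_smul, map_smul]
  apply Submodule.smul_mem
  obtain ⟨d, v, hv⟩ := exists_monomial_eq_prod m n μ
  rw [hv, map_prod]
  rw [Finset.prod_congr rfl fun (j : Fin d) (_ : j ∈ Finset.univ) => aeval_X (fs m n) (v j)]
  exact phi_prod_mem m n l hmn d (fun j => (v j).1) (fun j => (v j).2)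

/-- products of monomials with coefficient 1 -/
theorem prod_monomial_one {R : Type*} [CommSemiring R] {τ : Type*} {d : ℕ}
    (b : Fin d → (τ →₀ ℕ)) :
    (∏ j, (monomial (b j) (1 : R) : MvPolynomial τ R)) = monomial (∑ j, b j) (1 : R) := by
  induction d with
  | zero => simp [monomial_zero']
  | succ d ih =>
    rw [Fin.prod_univ_succ, Fin.sum_univ_succ, ih, monomial_mul, one_mul]

theorem sumToIter_rename_inr (Q : Rng m n) :
    sumToIter ℂ (Fin m × Fin m) (Fin m × Fin n) (rename Sum.inr Q) = C Q := by
  have h : (sumToIter ℂ (Fin m × Fin m) (Fin m × Fin n)).comp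
      ((rename (Sum.inr : Fin m × Fin n → (Fin m × Fin m) ⊕ (Fin m × Fin n))).toRingHom
        : Rng m n →+* Tng m n)
      = (C : Rng m n →+* MvPolynomial (Fin m × Fin m) (Rng m n)) := by
    apply MvPolynomial.ringHom_ext
    · intro a
      simp [rename_C, sumToIter_C]
    · intro v
      simp [rename_X, sumToIter_Xr]
  exact congrArg (fun f => f Q) h

/-- The generic determinant over the coefficient ring `Rng`. -/
noncomputable def Dm : MvPolynomial (Fin m × Fin m) (Rng m n) :=
  Matrix.det (Matrix.of fun p q : Fin m => (X (p, q) : MvPolynomial (Fin m × Fin m) (Rng m n)))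

theorem sumToIter_Ydet :
    sumToIter ℂ (Fin m × Fin m) (Fin m × Fin n) (Ydet m n) = Dm m n := by
  rw [Ydet, Dm, RingHom.map_det]
  congr 1
  ext p q
  simp [sumToIter_Xl]

theorem Dm_pow :
    Dm m n ^ l = ∑ τ : Fin l → Equiv.Perm (Fin m),
      (((sgnv m l τ : ℤ)) : MvPolynomial (Fin m × Fin m) (Rng m n))
        * monomial (bfun m l τ) (1 : Rng m n) := by
  have hD : Dm m n = ∑ g : Equiv.Perm (Fin m),
      (((Equiv.Perm.sign g : ℤ)) : MvPolynomial (Fin m × Fin m) (Rng m n))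
        * monomial (∑ p, Finsupp.single (g p, p) 1) (1 : Rng m n) := by
    rw [Dm, Matrix.det_apply']
    refine Finset.sum_congr rfl fun g _ => ?_
    rw [← prod_X_monomial (fun p : Fin m => (g p, p))]
    rfl
  have hpow : Dm m n ^ l = ∏ _i : Fin l, Dm m n := by
    simp
  rw [hpow, Finset.prod_congr rfl (fun (i : Fin l) _ => hD), Finset.prod_univ_sum,
    Fintype.piFinset_univ]
  refine Finset.sum_congr rfl fun τ _ => ?_
  rw [Finset.prod_mul_distrib, prod_monomial_one]
  congr 1
  · rw [sgnv]
    push_cast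
    rfl

/-- the integer coefficient of the monomial `bfun σ` in `det(Y)^l`. -/
noncomputable def dfun (b : (Fin m × Fin m) →₀ ℕ) : ℤ :=
  ∑ τ : Fin l → Equiv.Perm (Fin m), if bfun m l τ = b then sgnv m l τ else 0

theorem coeff_Dm_pow (σ : Fin l → Equiv.Perm (Fin m)) :
    coeff (bfun m l σ) (Dm m n ^ l) = (((dfun m l (bfun m l σ) : ℤ)) : Rng m n) := by
  rw [Dm_pow, dfun]
  rw [coeff_sum]
  push_cast
  refine Finset.sum_congr rfl fun τ _ => ?_
  rw [← map_intCast (C : Rng m n →+* MvPolynomial (Fin m × Fin m) (Rng m n)) (sgnv m l τ),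
    coeff_C_mul, coeff_monomial]
  split <;> simp

theorem bfun_apply (σ : Fin l → Equiv.Perm (Fin m)) (c : Fin m × Fin m) :
    bfun m l σ c = ∑ i, ∑ p, if (σ i p, p) = c then 1 else 0 := by
  rw [bfun]
  rw [Finsupp.finset_sum_apply]
  refine Finset.sum_congr rfl fun i _ => ?_
  rw [Finsupp.finset_sum_apply]
  refine Finset.sum_congr rfl fun p _ => ?_
  rw [Finsupp.single_apply]

theorem bfun_eq_one (τ : Fin l → Equiv.Perm (Fin m))
    (h : bfun m l τ = bfun m l (fun _ => 1)) : τ = (fun _ => 1) := by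
  funext i
  ext p
  simp only [Equiv.Perm.coe_one, id_eq]
  by_contra hne
  have hne2 : (τ i) p ≠ p := fun hcc => hne (congrArg Fin.val hcc)
  have hev : bfun m l τ (τ i p, p) = bfun m l (fun _ => 1) (τ i p, p) := by rw [h]
  have h0 : bfun m l (fun _ => 1) (τ i p, p) = 0 := by
    rw [bfun_apply]
    refine Finset.sum_eq_zero fun i' _ => Finset.sum_eq_zero fun p' _ => ?_
    rw [if_neg]
    intro hc
    simp only [Equiv.Perm.coe_one, id_eq, Prod.mk.injEq] at hc
    exact hne (congrArg Fin.val (hc.1.symm.trans hc.2))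
  have h1 : 1 ≤ bfun m l τ (τ i p, p) := by
    rw [bfun_apply]
    calc (1 : ℕ) = (if ((τ i p : Fin m), p) = (τ i p, p) then (1:ℕ) else 0) := by simp
    _ ≤ ∑ p' : Fin m, if ((τ i p' : Fin m), p') = (τ i p, p) then (1:ℕ) else 0 := by
        apply Finset.single_le_sum (f := fun p' => if ((τ i p' : Fin m), p') = (τ i p, p)
          then (1:ℕ) else 0) (fun _ _ => by positivity) (Finset.mem_univ p)
    _ ≤ _ := by
        apply Finset.single_le_sum (f := fun i' => ∑ p' : Fin m,
          if ((τ i' p' : Fin m), p') = (τ i p, p) then (1:ℕ) else 0)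
          (fun _ _ => by positivity) (Finset.mem_univ i)
  omega

/-- Part (a): extraction of `det(Y)^l · Q` returns a positive multiple of `Q`. -/
theorem phi_det (Q : MvPolynomial (Fin m × Fin n) ℂ) :
    ∃ c : ℤ, 0 < c ∧ PhiL m n l (Ydet m n ^ l * rename Sum.inr Q) = ((c : ℂ)) • Q := by
  refine ⟨∑ σ : Fin l → Equiv.Perm (Fin m),
    sgnv m l σ * (fct m (bfun m l σ) : ℤ) * dfun m l (bfun m l σ), ?_, ?_⟩
  · -- positivity
    have hgroup : (∑ σ : Fin l → Equiv.Perm (Fin m),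
        sgnv m l σ * (fct m (bfun m l σ) : ℤ) * dfun m l (bfun m l σ))
        = ∑ b ∈ Finset.image (bfun m l) Finset.univ,
            (fct m b : ℤ) * dfun m l b * dfun m l b := by
      rw [← Finset.sum_fiberwise_of_maps_to (g := bfun m l)
        (fun σ _ => Finset.mem_image_of_mem _ (Finset.mem_univ σ))]
      refine Finset.sum_congr rfl fun b hb => ?_
      have : ∑ σ ∈ Finset.univ.filter (fun σ => bfun m l σ = b),
          sgnv m l σ * (fct m (bfun m l σ) : ℤ) * dfun m l (bfun m l σ)
          = ∑ σ ∈ Finset.univ.filter (fun σ => bfun m l σ = b),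
            sgnv m l σ * (fct m b : ℤ) * dfun m l b := by
        refine Finset.sum_congr rfl fun σ hσ => ?_
        rw [Finset.mem_filter] at hσ
        rw [hσ.2]
      rw [this, ← Finset.sum_mul, ← Finset.sum_mul]
      have hd : ∑ σ ∈ Finset.univ.filter (fun σ => bfun m l σ = b), sgnv m l σ
          = dfun m l b := by
        rw [dfun, Finset.sum_filter]
      rw [hd]
      ring
    rw [hgroup]
    apply Finset.sum_pos'
    · intro b _
      have : (0 : ℤ) ≤ (fct m b : ℤ) := Int.ofNat_nonneg _
      nlinarith [sq_nonneg (dfun m l b), this]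
    · refine ⟨bfun m l (fun _ => 1), Finset.mem_image_of_mem _ (Finset.mem_univ _), ?_⟩
      have hd1 : dfun m l (bfun m l (fun _ => 1)) = 1 := by
        rw [dfun]
        rw [Finset.sum_eq_single (fun _ => (1 : Equiv.Perm (Fin m)))]
        · rw [if_pos rfl, sgnv]
          simp
        · intro τ _ hτ
          rw [if_neg]
          intro hc
          exact hτ (bfun_eq_one m l τ hc)
        · intro hc
          exact absurd (Finset.mem_univ _) hc
      rw [hd1]
      have : (0 : ℤ) < (fct m (bfun m l (fun _ => 1)) : ℤ) := by
        rw [fct]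
        push_cast
        apply Finset.prod_pos
        intro c _
        exact_mod_cast (Nat.factorial_pos _)
      nlinarith
  · -- the computation
    have hsub : sumToIter ℂ (Fin m × Fin m) (Fin m × Fin n) (Ydet m n ^ l * rename Sum.inr Q)
        = Dm m n ^ l * C Q := by
      rw [map_mul, map_pow, sumToIter_Ydet, sumToIter_rename_inr]
    rw [show PhiL m n l (Ydet m n ^ l * rename Sum.inr Q)
        = ∑ σ : Fin l → Equiv.Perm (Fin m),
          (((sgnv m l σ * fct m (bfun m l σ) : ℤ) : ℂ)) •
            coeff (bfun m l σ) (sumToIter ℂ (Fin m × Fin m) (Fin m × Fin n)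
              (Ydet m n ^ l * rename Sum.inr Q)) from rfl]
    rw [hsub]
    have hterm : ∀ σ : Fin l → Equiv.Perm (Fin m),
        (((sgnv m l σ * fct m (bfun m l σ) : ℤ) : ℂ)) •
          coeff (bfun m l σ) (Dm m n ^ l * C Q)
        = (((sgnv m l σ * (fct m (bfun m l σ) : ℤ) * dfun m l (bfun m l σ) : ℤ) : ℂ)) • Q := by
      intro σ
      rw [mul_comm (Dm m n ^ l) (C Q), coeff_C_mul, coeff_Dm_pow]
      rw [mul_comm Q, ← zsmul_eq_mul, ← Int.cast_smul_eq_zsmul ℂ, smul_smul]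
      congr 1
      push_cast
      ring
    rw [Finset.sum_congr rfl fun σ _ => hterm σ]
    rw [← Finset.sum_smul]
    congr 1
    push_cast
    rfl



end FFTProof

/-- If a polynomial `Q` in the entries of an `m × n` matrix of indeterminates satisfies
`Q(BU) = det(B)^l · Q(U)` for every `B ∈ GL_m(ℂ)`, then `Q` is a `ℂ`-linear combination of
products of `l` maximal minors of `U`. -/
theorem relInvariant_mem_span_prod_maxMinors
    (m n l : ℕ) (hm : 1 ≤ m) (hmn : m ≤ n)
    (Q : MvPolynomial (Fin m × Fin n) ℂ)
    (hQ : ∀ B : Matrix (Fin m) (Fin m) ℂ, IsUnit B.det →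
      aeval (fun st : Fin m × Fin n => ∑ p : Fin m, C (B st.1 p) * X (p, st.2)) Q
        = C (B.det ^ l) * Q) :
    Q ∈ Submodule.span ℂ
      { P : MvPolynomial (Fin m × Fin n) ℂ |
        ∃ J : Fin l → Fin m → Fin n, (∀ i, StrictMono (J i)) ∧
          P = ∏ i, maxMinor m n (J i) } := by
  have hmaster := FFTProof.master m n l Q hQ
  obtain ⟨c, hc, hPhiDet⟩ := FFTProof.phi_det m n l Q
  have hmem := FFTProof.phi_subst_mem m n l Q hmn
  rw [hmaster, hPhiDet] at hmem
  have hc' : (c : ℂ) ≠ 0 := by exact_mod_cast hc.ne'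
  have : Q = (c : ℂ)⁻¹ • ((c : ℂ) • Q) := by
    rw [smul_smul, inv_mul_cancel₀ hc', one_smul]
  rw [this]
  exact Submodule.smul_mem _ _ hmem
end

section
/- Let Δ_{ij} (1 ≤ i ≤ j ≤ 4) be 10 independent indeterminates over ℂ, set Δ_{ji} = Δ_{ij}, and let Δ = (Δ_{ij})_{1 ≤ i,j ≤ 4} be the resulting symmetric 4×4 matrix over the polynomial ring ℂ[Δ_{ij} : 1 ≤ i ≤ j ≤ 4]. Define C_1 = Δ_{13}Δ_{24} − Δ_{14}Δ_{23}, C_4 = Δ_{11}Δ_{22} − Δ_{12}², C_5 = Δ_{33}Δ_{44} − Δ_{34}², C_2 = C_4·C_5, and C_3 = det(Δ). Then the three polynomials C_1, C_2, C_3 are algebraically independent over ℂ. -/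
open MvPolynomial

/-- The index set for the 10 independent entries `Δ_{ij}`, `1 ≤ i ≤ j ≤ 4`,
of a symmetric 4×4 matrix of indeterminates. -/
abbrev SymIdx4 : Type := {p : Fin 4 × Fin 4 // p.1 ≤ p.2}

/-- The symmetric 4×4 matrix of indeterminates `Δ = (Δ_{ij})` over `ℂ[Δ_{ij} : i ≤ j]`. -/
noncomputable def Δmat : Matrix (Fin 4) (Fin 4) (MvPolynomial SymIdx4 ℂ) :=
  Matrix.of fun i j => X ⟨(i ⊓ j, i ⊔ j), inf_le_sup⟩

theorem det_fin_four' {R : Type*} [CommRing R] (M : Matrix (Fin 4) (Fin 4) R) : M.det =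
    M 0 0*M 1 1*M 2 2*M 3 3 - M 0 0*M 1 1*M 2 3*M 3 2 - M 0 0*M 1 2*M 2 1*M 3 3
    + M 0 0*M 1 2*M 2 3*M 3 1 + M 0 0*M 1 3*M 2 1*M 3 2 - M 0 0*M 1 3*M 2 2*M 3 1
    - M 0 1*M 1 0*M 2 2*M 3 3 + M 0 1*M 1 0*M 2 3*M 3 2 + M 0 1*M 1 2*M 2 0*M 3 3
    - M 0 1*M 1 2*M 2 3*M 3 0 - M 0 1*M 1 3*M 2 0*M 3 2 + M 0 1*M 1 3*M 2 2*M 3 0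
    + M 0 2*M 1 0*M 2 1*M 3 3 - M 0 2*M 1 0*M 2 3*M 3 1 - M 0 2*M 1 1*M 2 0*M 3 3
    + M 0 2*M 1 1*M 2 3*M 3 0 + M 0 2*M 1 3*M 2 0*M 3 1 - M 0 2*M 1 3*M 2 1*M 3 0
    - M 0 3*M 1 0*M 2 1*M 3 2 + M 0 3*M 1 0*M 2 2*M 3 1 + M 0 3*M 1 1*M 2 0*M 3 2
    - M 0 3*M 1 1*M 2 2*M 3 0 - M 0 3*M 1 2*M 2 0*M 3 1 + M 0 3*M 1 2*M 2 1*M 3 0 := by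
  simp [Matrix.det_succ_row_zero, Fin.sum_univ_succ,
    show (Fin.succ 2 : Fin 4) = 3 from rfl,
    show ((2:Fin 4).succAbove 2 : Fin 4) = 3 from rfl,
    show ((1:Fin 4).succAbove 2 : Fin 4) = 3 from rfl,
    show ((3:Fin 4).succAbove 2 : Fin 4) = 2 from rfl,
    show (Fin.castSucc 2 : Fin 4) = 2 from rfl]
  ring

noncomputable def tbl : Matrix (Fin 4) (Fin 4) (MvPolynomial (Fin 3) ℂ) :=
  !![X 1, 0, 0, 1;
     0, -1, -X 0, 0;
     0, -X 0, X 2, 1;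
     1, 0, 1, 0]
noncomputable def fsub : SymIdx4 → MvPolynomial (Fin 3) ℂ := fun p => tbl p.1.1 p.1.2
noncomputable def φ : MvPolynomial SymIdx4 ℂ →ₐ[ℂ] MvPolynomial (Fin 3) ℂ := aeval fsub
noncomputable def ψ : MvPolynomial (Fin 3) ℂ →ₐ[ℂ] MvPolynomial (Fin 3) ℂ :=
  aeval ![X 0, X 1, X 2 - X 1 - X 0 ^ 2]

lemma key (i j : Fin 4) : φ (Δmat i j) = tbl i j := by
  fin_cases i <;> fin_cases j <;> · rw [φ, show Δmat _ _ = X _ from rfl, aeval_X]; rfl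

lemma t00 : tbl 0 0 = X 1 := rfl
lemma t01 : tbl 0 1 = 0 := rfl
lemma t02 : tbl 0 2 = 0 := rfl
lemma t03 : tbl 0 3 = 1 := rfl
lemma t10 : tbl 1 0 = 0 := rfl
lemma t11 : tbl 1 1 = -1 := rfl
lemma t12 : tbl 1 2 = -X 0 := rfl
lemma t13 : tbl 1 3 = 0 := rfl
lemma t20 : tbl 2 0 = 0 := rfl
lemma t21 : tbl 2 1 = -X 0 := rfl
lemma t22 : tbl 2 2 = X 2 := rfl
lemma t23 : tbl 2 3 = 1 := rfl
lemma t30 : tbl 3 0 = 1 := rfl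
lemma t31 : tbl 3 1 = 0 := rfl
lemma t32 : tbl 3 2 = 1 := rfl
lemma t33 : tbl 3 3 = 0 := rfl

lemma psi0 : ψ (X 0) = X 0 := by simp [ψ]
lemma psi1 : ψ (X 1) = X 1 := by simp [ψ]
lemma psi2 : ψ (X 2) = X 2 - X 1 - X 0 ^ 2 := by
  rw [ψ, aeval_X]; simp [Matrix.cons_val_two, Matrix.vecTail, Matrix.vecHead]


/-- With `C₁ = Δ₁₃Δ₂₄ − Δ₁₄Δ₂₃`, `C₂ = (Δ₁₁Δ₂₂ − Δ₁₂²)(Δ₃₃Δ₄₄ − Δ₃₄²)` and `C₃ = det Δ`,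
the polynomials `C₁, C₂, C₃` are algebraically independent over `ℂ`. -/
theorem c1_c2_c3_algebraicIndependent :
    AlgebraicIndependent ℂ
      ![Δmat 0 2 * Δmat 1 3 - Δmat 0 3 * Δmat 1 2,
        (Δmat 0 0 * Δmat 1 1 - Δmat 0 1 ^ 2) * (Δmat 2 2 * Δmat 3 3 - Δmat 2 3 ^ 2),
        Δmat.det] := by
  apply AlgebraicIndependent.of_comp (ψ.comp φ)
  have h : ⇑(ψ.comp φ) ∘
      ![Δmat 0 2 * Δmat 1 3 - Δmat 0 3 * Δmat 1 2,
        (Δmat 0 0 * Δmat 1 1 - Δmat 0 1 ^ 2) * (Δmat 2 2 * Δmat 3 3 - Δmat 2 3 ^ 2),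
        Δmat.det] = X := by
    have hdet : φ Δmat.det = tbl.det := by
      rw [AlgHom.map_det]
      congr 1
      exact Matrix.ext key
    funext i
    fin_cases i
    · show ψ (φ (Δmat 0 2 * Δmat 1 3 - Δmat 0 3 * Δmat 1 2)) = X 0
      simp only [map_mul, map_sub, map_pow, key, t02, t13, t03, t12]
      simp only [map_mul, map_sub, map_pow, map_neg, map_one, map_zero, psi0]
      ring
    · show ψ (φ ((Δmat 0 0 * Δmat 1 1 - Δmat 0 1 ^ 2) * (Δmat 2 2 * Δmat 3 3 - Δmat 2 3 ^ 2))) = X 1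
      simp only [map_mul, map_sub, map_pow, key, t00, t11, t01, t22, t33, t23]
      simp only [map_mul, map_sub, map_pow, map_neg, map_one, map_zero, psi0, psi1, psi2]
      ring
    · show ψ (φ Δmat.det) = X 2
      rw [hdet, det_fin_four']
      simp only [t00, t01, t02, t03, t10, t11, t12, t13, t20, t21, t22, t23, t30, t31, t32, t33]
      simp only [map_mul, map_sub, map_add, map_pow, map_neg, map_one, map_zero, psi0, psi1, psi2]
      ring
  rw [h]
  exact algebraicIndependent_X _ _
end

section
/- Let r ≥ 2 and let u_{iν}, v_{iν} (i ∈ {1,2}, 1 ≤ ν ≤ r) be 4r independent indeterminates over ℚ, and set R_r = Σ_{1 ≤ i < j ≤ r} (u_{1i}u_{2j} − u_{1j}u_{2i})(v_{1i}v_{2j} − v_{1j}v_{2i}). Then for every integer l ≥ 1 and all indices 1 ≤ p < q ≤ r one has the identity of polynomials ∂²(R_r^l)/∂u_{1p}∂u_{2q} − ∂²(R_r^l)/∂u_{1q}∂u_{2p} = l(l+1)·(v_{1p}v_{2q} − v_{1q}v_{2p})·R_r^{l−1}. -/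
open MvPolynomial

/-- Variable index type for the entries of two `2 × r` matrices `U` (left summand)
and `V` (right summand) of indeterminates. -/
abbrev UVvar (r : ℕ) : Type := (Fin 2 × Fin r) ⊕ (Fin 2 × Fin r)

/-- The entry `u_{iν}` of `U`. -/
noncomputable def uVar (r : ℕ) (i : Fin 2) (ν : Fin r) : MvPolynomial (UVvar r) ℚ :=
  X (Sum.inl (i, ν))

/-- The entry `v_{iν}` of `V`. -/
noncomputable def vVar (r : ℕ) (i : Fin 2) (ν : Fin r) : MvPolynomial (UVvar r) ℚ :=
  X (Sum.inr (i, ν))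

/-- `R_r = Σ_{i<j} (u_{1i}u_{2j} − u_{1j}u_{2i})(v_{1i}v_{2j} − v_{1j}v_{2i})`,
the pairing of the 2×2 minors of `U` with those of `V`. -/
noncomputable def Rpoly (r : ℕ) : MvPolynomial (UVvar r) ℚ :=
  ∑ i : Fin r, ∑ j ∈ Finset.Ioi i,
    (uVar r 0 i * uVar r 1 j - uVar r 0 j * uVar r 1 i) *
      (vVar r 0 i * vVar r 1 j - vVar r 0 j * vVar r 1 i)

/-- The 2×2 minor of `V` with columns `i, j`. -/
noncomputable def Vm (r : ℕ) (i j : Fin r) : MvPolynomial (UVvar r) ℚ :=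
  vVar r 0 i * vVar r 1 j - vVar r 0 j * vVar r 1 i

lemma Vm_self (r : ℕ) (i : Fin r) : Vm r i i = 0 := by
  rw [Vm]; ring

/-- `R_r` as a full double sum. -/
lemma Rfull (r : ℕ) :
    Rpoly r = ∑ i : Fin r, ∑ j : Fin r, uVar r 0 i * uVar r 1 j * Vm r i j := by
  have h := Finset.sum_sum_Ioi_add_eq_sum_sum_off_diag
    (fun a b => uVar r 0 b * uVar r 1 a * Vm r b a)
  have hL : Rpoly r
      = ∑ i : Fin r, ∑ j ∈ Finset.Ioi i,
          ((fun a b => uVar r 0 b * uVar r 1 a * Vm r b a) j i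
            + (fun a b => uVar r 0 b * uVar r 1 a * Vm r b a) i j) := by
    rw [Rpoly]
    refine Finset.sum_congr rfl fun i _ => Finset.sum_congr rfl fun j _ => ?_
    simp only [Vm, uVar, vVar]
    ring
  rw [hL, h]
  refine Finset.sum_congr rfl fun i _ => ?_
  refine Finset.sum_subset (Finset.subset_univ _) fun x _ hx => ?_
  have hxi : x = i := by simpa using hx
  subst hxi
  rw [Vm_self]; ring

lemma pderiv_u0 (r : ℕ) (p : Fin r) :
    pderiv (Sum.inl (0, p)) (Rpoly r) = ∑ j : Fin r, uVar r 1 j * Vm r p j := by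
  classical
  have key : ∀ i j : Fin r,
      pderiv (Sum.inl ((0 : Fin 2), p)) (uVar r 0 i * uVar r 1 j * Vm r i j)
        = if i = p then uVar r 1 j * Vm r p j else 0 := by
    intro i j
    by_cases h : i = p
    · subst h
      simp [uVar, vVar, Vm, pderiv_mul, pderiv_X_of_ne, pderiv_X_self, map_sub, mul_comm]
    · simp [uVar, vVar, Vm, pderiv_mul, pderiv_X_of_ne, pderiv_X_self, map_sub,
        Ne.symm h, h]
  rw [Rfull, map_sum]
  simp only [map_sum, key]
  rw [Finset.sum_comm]
  simp [Finset.sum_ite_eq']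

lemma pderiv_u1 (r : ℕ) (q : Fin r) :
    pderiv (Sum.inl (1, q)) (Rpoly r) = ∑ i : Fin r, uVar r 0 i * Vm r i q := by
  classical
  have key : ∀ i j : Fin r,
      pderiv (Sum.inl ((1 : Fin 2), q)) (uVar r 0 i * uVar r 1 j * Vm r i j)
        = if j = q then uVar r 0 i * Vm r i q else 0 := by
    intro i j
    by_cases h : j = q
    · subst h
      simp [uVar, vVar, Vm, pderiv_mul, pderiv_X_of_ne, pderiv_X_self, map_sub, mul_comm]
    · simp [uVar, vVar, Vm, pderiv_mul, pderiv_X_of_ne, pderiv_X_self, map_sub,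
        Ne.symm h, h]
  rw [Rfull, map_sum]
  simp only [map_sum, key]
  simp [Finset.sum_ite_eq']

lemma pderiv_u0_sum (r : ℕ) (p q : Fin r) :
    pderiv (Sum.inl (0, p)) (∑ i : Fin r, uVar r 0 i * Vm r i q) = Vm r p q := by
  rw [map_sum]
  have key : ∀ i : Fin r,
      pderiv (Sum.inl ((0 : Fin 2), p)) (uVar r 0 i * Vm r i q)
        = if i = p then Vm r p q else 0 := by
    intro i
    by_cases h : i = p
    · subst h
      simp [uVar, vVar, Vm, pderiv_mul, pderiv_X_of_ne, pderiv_X_self, map_sub, mul_comm]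
    · simp [uVar, vVar, Vm, pderiv_mul, pderiv_X_of_ne, pderiv_X_self, map_sub,
        Ne.symm h, h]
  simp [key, Finset.sum_ite_eq']

/-- The key Plücker-type identity. -/
lemma cross_identity (r : ℕ) (p q : Fin r) :
    (∑ j : Fin r, uVar r 1 j * Vm r p j) * (∑ i : Fin r, uVar r 0 i * Vm r i q)
      - (∑ j : Fin r, uVar r 1 j * Vm r q j) * (∑ i : Fin r, uVar r 0 i * Vm r i p)
    = Vm r p q * Rpoly r := by
  rw [Rfull, Finset.sum_mul_sum, Finset.sum_mul_sum]
  simp only [← Finset.sum_sub_distrib, Finset.mul_sum]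
  rw [Finset.sum_comm]
  refine Finset.sum_congr rfl fun i _ => Finset.sum_congr rfl fun j _ => ?_
  simp only [Vm, uVar, vVar]
  ring

set_option linter.unusedVariables false in
/-- `∂²(R_r^l)/∂u_{1p}∂u_{2q} − ∂²(R_r^l)/∂u_{1q}∂u_{2p}
  = l(l+1)·(v_{1p}v_{2q} − v_{1q}v_{2p})·R_r^{l−1}`. -/
theorem pderiv_Rpoly_pow (r : ℕ) (hr : 2 ≤ r) (l : ℕ) (hl : 1 ≤ l)
    (p q : Fin r) (hpq : p < q) :
    pderiv (Sum.inl (0, p)) (pderiv (Sum.inl (1, q)) (Rpoly r ^ l))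
        - pderiv (Sum.inl (0, q)) (pderiv (Sum.inl (1, p)) (Rpoly r ^ l))
      = (l * (l + 1)) •
          ((vVar r 0 p * vVar r 1 q - vVar r 0 q * vVar r 1 p) * Rpoly r ^ (l - 1)) := by
  classical
  have hVm : (vVar r 0 p * vVar r 1 q - vVar r 0 q * vVar r 1 p) = Vm r p q := rfl
  have hswap : Vm r q p = -Vm r p q := by rw [Vm, Vm]; ring
  have L : ∀ (a b : Fin r) (n : ℕ),
      pderiv (Sum.inl ((0 : Fin 2), a)) (pderiv (Sum.inl ((1 : Fin 2), b)) (Rpoly r ^ n))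
        = (n : MvPolynomial (UVvar r) ℚ) *
            ((n - 1 : ℕ) * Rpoly r ^ (n - 1 - 1) *
                (∑ j : Fin r, uVar r 1 j * Vm r a j) * (∑ i : Fin r, uVar r 0 i * Vm r i b)
              + Rpoly r ^ (n - 1) * Vm r a b) := by
    intro a b n
    have hC : pderiv (Sum.inl ((0 : Fin 2), a)) ((n : MvPolynomial (UVvar r) ℚ)) = 0 := by
      rw [← MvPolynomial.C_eq_coe_nat, pderiv_C]
    rw [pderiv_pow, pderiv_u1, pderiv_mul, pderiv_mul, hC, pderiv_pow, pderiv_u0,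
      pderiv_u0_sum]
    ring
  obtain ⟨m, rfl⟩ : ∃ m, l = m + 1 := ⟨l - 1, (Nat.succ_pred_eq_of_pos hl).symm⟩
  rw [L, L, hVm, hswap]
  rcases m with _ | n
  · simp only [Nat.add_sub_cancel, Nat.sub_self, Nat.cast_zero, Nat.cast_one, pow_zero,
      nsmul_eq_mul]
    push_cast
    ring
  · simp only [Nat.add_sub_cancel, nsmul_eq_mul]
    have hc := cross_identity r p q
    have hpow : Rpoly r ^ n * (Vm r p q * Rpoly r) = Vm r p q * Rpoly r ^ (n + 1) := by
      rw [pow_succ]; ring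
    push_cast
    linear_combination (((n : MvPolynomial (UVvar r) ℚ) + 2) * ((n : MvPolynomial (UVvar r) ℚ) + 1)
        * Rpoly r ^ n) * hc
      + (((n : MvPolynomial (UVvar r) ℚ) + 2) * ((n : MvPolynomial (UVvar r) ℚ) + 1)) * hpow
end

section
/- Let r ≥ 2 and let u_{iν}, v_{iν} (i ∈ {1,2}, 1 ≤ ν ≤ r) be 4r independent indeterminates over ℚ, and set R_r = Σ_{1 ≤ i < j ≤ r} (u_{1i}u_{2j} − u_{1j}u_{2i})(v_{1i}v_{2j} − v_{1j}v_{2i}). Then for every integer l ≥ 1 and every choice of pairs (p_1,q_1), …, (p_l,q_l) with 1 ≤ p_t < q_t ≤ r for each t, applying the composite differential operator ∏_{t=1}^{l} ( ∂²/∂u_{1p_t}∂u_{2q_t} − ∂²/∂u_{1q_t}∂u_{2p_t} ) to R_r^l yields l!·(l+1)!·∏_{t=1}^{l} (v_{1p_t}v_{2q_t} − v_{1q_t}v_{2p_t}). -/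
open MvPolynomial

noncomputable def Pp (r : ℕ) : MvPolynomial (UVvar r) ℚ := ∑ i, vVar r 0 i * uVar r 0 i
noncomputable def Sp (r : ℕ) : MvPolynomial (UVvar r) ℚ := ∑ i, vVar r 1 i * uVar r 1 i
noncomputable def Qp (r : ℕ) : MvPolynomial (UVvar r) ℚ := ∑ i, vVar r 0 i * uVar r 1 i
noncomputable def Tp (r : ℕ) : MvPolynomial (UVvar r) ℚ := ∑ i, vVar r 1 i * uVar r 0 i

lemma Rpoly_factor (r : ℕ) : Rpoly r = Pp r * Sp r - Qp r * Tp r := by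
  set g : Fin r → Fin r → MvPolynomial (UVvar r) ℚ :=
    fun i j => vVar r 0 i * vVar r 1 j * (uVar r 0 i * uVar r 1 j - uVar r 0 j * uVar r 1 i)
    with hg
  have h1 : Rpoly r = ∑ i, ∑ j ∈ Finset.Ioi i, (g j i + g i j) := by
    unfold Rpoly
    refine Finset.sum_congr rfl fun i _ => Finset.sum_congr rfl fun j _ => ?_
    simp only [hg]; ring
  have h4 : Pp r * Sp r - Qp r * Tp r = ∑ i, ∑ j, g i j := by
    unfold Pp Sp Qp Tp
    rw [Finset.sum_mul_sum, Finset.sum_mul_sum, ← Finset.sum_sub_distrib]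
    refine Finset.sum_congr rfl fun i _ => ?_
    rw [← Finset.sum_sub_distrib]
    refine Finset.sum_congr rfl fun j _ => ?_
    simp only [hg]; ring
  rw [h1, Finset.sum_sum_Ioi_add_eq_sum_sum_off_diag g, h4, Finset.sum_comm]
  refine Finset.sum_congr rfl fun i _ => ?_
  refine Finset.sum_subset (Finset.subset_univ _) fun j _ hj => ?_
  have hji : j = i := by simpa using hj
  simp [hji, hg]

lemma pderiv_inl_vVar (r : ℕ) (x : Fin 2 × Fin r) (i : Fin 2) (ν : Fin r) :
    pderiv (Sum.inl x) (vVar r i ν) = 0 := by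
  simp [vVar]

lemma pderiv_uVar (r : ℕ) (a i : Fin 2) (b ν : Fin r) :
    pderiv (Sum.inl (a, b) : UVvar r) (uVar r i ν)
      = if a = i ∧ b = ν then 1 else 0 := by
  classical
  unfold uVar
  rcases eq_or_ne ((a, b) : Fin 2 × Fin r) (i, ν) with h | h
  · obtain ⟨h1, h2⟩ := Prod.ext_iff.mp h
    dsimp at h1 h2
    subst h1; subst h2
    simp
  · rw [pderiv_X_of_ne (by simpa using (Ne.symm h))]
    rw [Ne, Prod.ext_iff] at h
    dsimp at h
    rw [if_neg h]

lemma pd_sum (r : ℕ) (i j a : Fin 2) (b : Fin r) :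
    pderiv (Sum.inl (a, b) : UVvar r) (∑ ν, vVar r i ν * uVar r j ν)
      = if a = j then vVar r i b else 0 := by
  rw [map_sum]
  simp only [pderiv_mul, pderiv_inl_vVar, pderiv_uVar, zero_mul, zero_add, mul_ite, mul_one,
    mul_zero]
  by_cases h : a = j
  · simp [h, Finset.sum_ite_eq]
  · simp [h]

lemma pd0_Pp (r : ℕ) (b : Fin r) : pderiv (Sum.inl (0, b) : UVvar r) (Pp r) = vVar r 0 b := by
  rw [Pp, pd_sum]; simp
lemma pd0_Sp (r : ℕ) (b : Fin r) : pderiv (Sum.inl (0, b) : UVvar r) (Sp r) = 0 := by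
  rw [Sp, pd_sum]; simp [Fin.ext_iff]
lemma pd0_Qp (r : ℕ) (b : Fin r) : pderiv (Sum.inl (0, b) : UVvar r) (Qp r) = 0 := by
  rw [Qp, pd_sum]; simp [Fin.ext_iff]
lemma pd0_Tp (r : ℕ) (b : Fin r) : pderiv (Sum.inl (0, b) : UVvar r) (Tp r) = vVar r 1 b := by
  rw [Tp, pd_sum]; simp
lemma pd1_Pp (r : ℕ) (b : Fin r) : pderiv (Sum.inl (1, b) : UVvar r) (Pp r) = 0 := by
  rw [Pp, pd_sum]; simp [Fin.ext_iff]
lemma pd1_Sp (r : ℕ) (b : Fin r) : pderiv (Sum.inl (1, b) : UVvar r) (Sp r) = vVar r 1 b := by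
  rw [Sp, pd_sum]; simp
lemma pd1_Qp (r : ℕ) (b : Fin r) : pderiv (Sum.inl (1, b) : UVvar r) (Qp r) = vVar r 0 b := by
  rw [Qp, pd_sum]; simp
lemma pd1_Tp (r : ℕ) (b : Fin r) : pderiv (Sum.inl (1, b) : UVvar r) (Tp r) = 0 := by
  rw [Tp, pd_sum]; simp [Fin.ext_iff]

lemma pd0_R (r : ℕ) (b : Fin r) :
    pderiv (Sum.inl (0, b) : UVvar r) (Rpoly r) = vVar r 0 b * Sp r - Qp r * vVar r 1 b := by
  rw [Rpoly_factor, map_sub, pderiv_mul, pderiv_mul, pd0_Pp, pd0_Sp, pd0_Qp, pd0_Tp]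
  ring

lemma pd1_R (r : ℕ) (b : Fin r) :
    pderiv (Sum.inl (1, b) : UVvar r) (Rpoly r) = Pp r * vVar r 1 b - vVar r 0 b * Tp r := by
  rw [Rpoly_factor, map_sub, pderiv_mul, pderiv_mul, pd1_Pp, pd1_Sp, pd1_Qp, pd1_Tp]
  ring

lemma step (r : ℕ) (k : ℕ) (p q : Fin r) :
    pderiv (Sum.inl (0, p) : UVvar r) (pderiv (Sum.inl (1, q) : UVvar r) (Rpoly r ^ (k + 1)))
      - pderiv (Sum.inl (0, q) : UVvar r) (pderiv (Sum.inl (1, p) : UVvar r) (Rpoly r ^ (k + 1)))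
    = ((k + 1) * (k + 2)) •
        ((vVar r 0 p * vVar r 1 q - vVar r 0 q * vVar r 1 p) * Rpoly r ^ k) := by
  have key : ∀ a b : Fin r,
      pderiv (Sum.inl (0, a) : UVvar r) (pderiv (Sum.inl (1, b) : UVvar r) (Rpoly r ^ (k + 1)))
      = (k + 1) • ((k • (Rpoly r ^ (k - 1) * (vVar r 0 a * Sp r - Qp r * vVar r 1 a)))
            * (Pp r * vVar r 1 b - vVar r 0 b * Tp r)
          + Rpoly r ^ k * (vVar r 0 a * vVar r 1 b - vVar r 0 b * vVar r 1 a)) := by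
    intro a b
    have h1 : pderiv (Sum.inl (1, b) : UVvar r) (Rpoly r ^ (k + 1))
        = (k + 1) • (Rpoly r ^ k * (Pp r * vVar r 1 b - vVar r 0 b * Tp r)) := by
      rw [(pderiv (Sum.inl (1, b) : UVvar r)).leibniz_pow, pd1_R]
      simp [smul_eq_mul, mul_assoc]
    rw [h1, map_nsmul, pderiv_mul, (pderiv (Sum.inl (0, a) : UVvar r)).leibniz_pow, pd0_R,
      map_sub, pderiv_mul, pderiv_mul, pd0_Pp, pd0_Tp, pderiv_inl_vVar, pderiv_inl_vVar]
    simp only [smul_eq_mul, nsmul_eq_mul]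
    ring
  rw [key p q, key q p]
  rcases k with _ | m
  · simp only [Nat.zero_eq, zero_smul, zero_mul, pow_zero, Nat.zero_add]
    simp only [smul_eq_mul, nsmul_eq_mul]
    push_cast
    ring
  · simp only [Nat.add_sub_cancel]
    simp only [Rpoly_factor, smul_eq_mul, nsmul_eq_mul]
    push_cast
    ring

lemma pd_clist (r l : ℕ) (p q : Fin l → Fin r) (ts : List (Fin l)) (x : Fin 2 × Fin r) :
    pderiv (Sum.inl x : UVvar r)
      ((ts.map fun t =>
        vVar r 0 (p t) * vVar r 1 (q t) - vVar r 0 (q t) * vVar r 1 (p t)).prod) = 0 := by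
  induction ts with
  | nil => simp
  | cons t ts ih =>
    simp only [List.map_cons, List.prod_cons, pderiv_mul, ih, mul_zero, add_zero, map_sub,
      pderiv_mul, pderiv_inl_vVar, zero_mul, mul_zero, add_zero, zero_add, sub_zero, sub_self]

lemma pull (r : ℕ) (Cst : ℕ) (M f : MvPolynomial (UVvar r) ℚ)
    (hM : ∀ x : Fin 2 × Fin r, pderiv (Sum.inl x : UVvar r) M = 0) (a b : Fin r) :
    pderiv (Sum.inl (0, a) : UVvar r) (pderiv (Sum.inl (1, b) : UVvar r) (Cst • (M * f)))
      = Cst • (M * pderiv (Sum.inl (0, a) : UVvar r)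
          (pderiv (Sum.inl (1, b) : UVvar r) f)) := by
  rw [map_nsmul, pderiv_mul, hM, zero_mul, zero_add, map_nsmul, pderiv_mul, hM, zero_mul,
    zero_add]

lemma fold_eq (r l : ℕ) (p q : Fin l → Fin r) (ts : List (Fin l)) (h : ts.length ≤ l) :
    ts.foldr
        (fun t f =>
          pderiv (Sum.inl (0, p t)) (pderiv (Sum.inl (1, q t)) f)
            - pderiv (Sum.inl (0, q t)) (pderiv (Sum.inl (1, p t)) f))
        (Rpoly r ^ l)
    = (∏ j ∈ Finset.range ts.length, (l - j) * (l - j + 1)) •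
        ((ts.map fun t =>
            vVar r 0 (p t) * vVar r 1 (q t) - vVar r 0 (q t) * vVar r 1 (p t)).prod
          * Rpoly r ^ (l - ts.length)) := by
  induction ts with
  | nil => simp
  | cons t ts ih =>
    have hlen : ts.length < l := by
      simp only [List.length_cons] at h; omega
    rw [List.foldr_cons, ih hlen.le]
    have hn : l - ts.length = (l - (ts.length + 1)) + 1 := by omega
    rw [hn, pull r _ _ _ (pd_clist r l p q ts), pull r _ _ _ (pd_clist r l p q ts),
      ← smul_sub, ← mul_sub, step]
    have hK : (l - (ts.length + 1) + 1) * (l - (ts.length + 1) + 2)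
        = (l - ts.length) * (l - ts.length + 1) := by rw [hn]
    rw [hK]
    simp only [List.length_cons, List.map_cons, List.prod_cons, Finset.prod_range_succ,
      nsmul_eq_mul, Nat.cast_mul]
    ring

lemma prod_add_two (n : ℕ) : ∏ j ∈ Finset.range n, (j + 2) = (n + 1).factorial := by
  induction n with
  | zero => simp
  | succ n ih =>
    rw [Finset.prod_range_succ, ih, Nat.factorial_succ (n + 1)]
    ring

lemma const_eq (l : ℕ) :
    ∏ j ∈ Finset.range l, (l - j) * (l - j + 1) = l.factorial * (l + 1).factorial := by
  rw [Finset.prod_mul_distrib]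
  have h1 : ∏ j ∈ Finset.range l, (l - j) = l.factorial := by
    calc ∏ j ∈ Finset.range l, (l - j)
        = ∏ j ∈ Finset.range l, ((l - 1 - j) + 1) :=
          Finset.prod_congr rfl fun j hj => by
            have := Finset.mem_range.mp hj; omega
      _ = ∏ j ∈ Finset.range l, (j + 1) := Finset.prod_range_reflect (fun j => j + 1) l
      _ = l.factorial := Finset.prod_range_add_one_eq_factorial l
  have h2 : ∏ j ∈ Finset.range l, (l - j + 1) = (l + 1).factorial := by
    calc ∏ j ∈ Finset.range l, (l - j + 1)
        = ∏ j ∈ Finset.range l, ((l - 1 - j) + 2) :=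
          Finset.prod_congr rfl fun j hj => by
            have := Finset.mem_range.mp hj; omega
      _ = ∏ j ∈ Finset.range l, (j + 2) := Finset.prod_range_reflect (fun j => j + 2) l
      _ = (l + 1).factorial := prod_add_two l
  rw [h1, h2]

/-- Applying the (commuting) composite operator
`∏_{t=1}^{l} (∂²/∂u_{1p_t}∂u_{2q_t} − ∂²/∂u_{1q_t}∂u_{2p_t})` to `R_r^l` yields
`l!·(l+1)!·∏_t (v_{1p_t}v_{2q_t} − v_{1q_t}v_{2p_t})`. -/
theorem iterated_pderiv_Rpoly_pow (r : ℕ) (hr : 2 ≤ r) (l : ℕ) (hl : 1 ≤ l)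
    (p q : Fin l → Fin r) (hpq : ∀ t, p t < q t) :
    (List.finRange l).foldr
        (fun t f =>
          pderiv (Sum.inl (0, p t)) (pderiv (Sum.inl (1, q t)) f)
            - pderiv (Sum.inl (0, q t)) (pderiv (Sum.inl (1, p t)) f))
        (Rpoly r ^ l)
      = (Nat.factorial l * Nat.factorial (l + 1)) •
          ∏ t : Fin l,
            (vVar r 0 (p t) * vVar r 1 (q t) - vVar r 0 (q t) * vVar r 1 (p t)) := by
  rw [fold_eq r l p q (List.finRange l) (by simp)]
  simp only [List.length_finRange, Nat.sub_self, pow_zero, mul_one, const_eq]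
  rw [Fin.prod_univ_def]
end

section
/- Let l be a natural number and for natural numbers a, b with a + 2b = l and a real number k set q_{a,b}(k) = ((−1)^b / a!) · (k)_l · (2k+2b−1)_a · (k−1/2)_b · (k−3/2)_{a+b}. Then for every integer b with 0 ≤ b ≤ ⌊l/2⌋ and every real number k, (2k+l−2)(2k+l−3) · Σ_{b_0 = b}^{⌊l/2⌋} q_{l−2b_0, b_0}(k) = 2(k+b−1)(2k+2l−2b−3) · q_{l−2b, b}(k). -/
/-- The ascending Pochhammer symbol `(x)_n = x(x+1)⋯(x+n−1)` for a real `x`. -/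
noncomputable def poch (x : ℝ) (n : ℕ) : ℝ := (ascPochhammer ℝ n).eval x

/-- `q_{a,b}(k) = ((−1)^b / a!)·(k)_l·(2k+2b−1)_a·(k−1/2)_b·(k−3/2)_{a+b}`
(intended for `a + 2b = l`). -/
noncomputable def qab (l a b : ℕ) (k : ℝ) : ℝ :=
  ((-1) ^ b / (a.factorial : ℝ)) * poch k l * poch (2 * k + 2 * b - 1) a *
    poch (k - 1 / 2) b * poch (k - 3 / 2) (a + b)

lemma poch_succ (x : ℝ) (n : ℕ) : poch x (n + 1) = poch x n * (x + n) := by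
  simp [poch, ascPochhammer_succ_right]

lemma poch_succ_left (x : ℝ) (n : ℕ) : poch x (n + 1) = x * poch (x + 1) n := by
  simp [poch, ascPochhammer_succ_left, Polynomial.eval_comp]

lemma poch_two_left (x : ℝ) (n : ℕ) : poch x (n + 2) = x * (x + 1) * poch (x + 2) n := by
  rw [show n + 2 = (n + 1) + 1 from rfl, poch_succ_left, poch_succ_left, mul_assoc]
  ring_nf

lemma qab_key (l m b : ℕ) (hl : l = m + 2 + 2 * b) (k : ℝ) :
    2 * (k + b) * (2 * k + 2 * l - 2 * b - 5) * qab l m (b + 1) k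
      = -((m + 2) * (m + 1)) * qab l (m + 2) b k := by
  have hlr : (l : ℝ) = m + 2 + 2 * b := by exact_mod_cast congrArg (Nat.cast (R := ℝ)) hl
  unfold qab
  have h1 : m + 2 + b = (m + (b + 1)) + 1 := by omega
  rw [h1, poch_succ (k - 3/2), poch_succ (k - 1/2) b, poch_two_left]
  have h2 : (2 : ℝ) * k + 2 * ((b : ℕ) + 1 : ℕ) - 1 = (2 * k + 2 * b - 1) + 2 := by
    push_cast; ring
  rw [h2]
  rw [Nat.factorial_succ (m + 1), Nat.factorial_succ m]
  have hm : (m.factorial : ℝ) ≠ 0 := by exact_mod_cast m.factorial_ne_zero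
  field_simp
  push_cast [hlr]
  ring

/-- The denominator-cleared recursion
`(2k+l−2)(2k+l−3)·Σ_{b₀=b}^{⌊l/2⌋} q_{l−2b₀,b₀} = 2(k+b−1)(2k+2l−2b−3)·q_{l−2b,b}`. -/
theorem qab_sum_recursion (l b : ℕ) (hb : b ≤ l / 2) (k : ℝ) :
    (2 * k + l - 2) * (2 * k + l - 3) *
        ∑ b0 ∈ Finset.Icc b (l / 2), qab l (l - 2 * b0) b0 k
      = 2 * (k + b - 1) * (2 * k + 2 * l - 2 * b - 3) * qab l (l - 2 * b) b k := by
  suffices H : ∀ d b, b + d = l / 2 → (2 * k + l - 2) * (2 * k + l - 3) *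
        ∑ b0 ∈ Finset.Icc b (l / 2), qab l (l - 2 * b0) b0 k
      = 2 * (k + b - 1) * (2 * k + 2 * l - 2 * b - 3) * qab l (l - 2 * b) b k by
    exact H (l / 2 - b) b (by omega)
  intro d
  induction d with
  | zero =>
    intro b hb0
    have hbe : b = l / 2 := by omega
    subst hbe
    rw [Finset.Icc_self, Finset.sum_singleton]
    have hc : (2 * k + (l : ℝ) - 2) * (2 * k + (l : ℝ) - 3)
        = 2 * (k + ((l / 2 : ℕ) : ℝ) - 1) * (2 * k + 2 * (l : ℝ) - 2 * ((l / 2 : ℕ) : ℝ) - 3) := by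
      rcases (show l = 2 * (l / 2) ∨ l = 2 * (l / 2) + 1 by omega) with h | h
      · have h' : (l : ℝ) = 2 * ((l / 2 : ℕ) : ℝ) := by exact_mod_cast h
        rw [h']; ring
      · have h' : (l : ℝ) = 2 * ((l / 2 : ℕ) : ℝ) + 1 := by exact_mod_cast h
        rw [h']; ring
    rw [hc]
  | succ n ih =>
    intro b hb0
    have hb1 : (b + 1) + n = l / 2 := by omega
    have hicc : Finset.Icc b (l / 2) = insert b (Finset.Icc (b + 1) (l / 2)) := by
      ext x
      simp only [Finset.mem_Icc, Finset.mem_insert]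
      omega
    rw [hicc, Finset.sum_insert (by simp), mul_add]
    have ih' := ih (b + 1) hb1
    have e1 : l - 2 * (b + 1) = l - 2 * b - 2 := by omega
    set m := l - 2 * b - 2 with hm
    have e2 : l - 2 * b = m + 2 := by omega
    have hl : l = m + 2 + 2 * b := by omega
    have hlr : (l : ℝ) = m + 2 + 2 * b := by exact_mod_cast congrArg (Nat.cast (R := ℝ)) hl
    rw [e1] at ih'
    rw [e2]
    push_cast at ih' ⊢
    have key := qab_key l m b hl k
    have scal : (2 * k + (l : ℝ) - 2) * (2 * k + l - 3)
        = 2 * (k + b - 1) * (2 * k + 2 * l - 2 * b - 3) + (m + 2) * (m + 1) := by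
      rw [hlr]; ring
    linear_combination ih' + key + qab l (m + 2) b k * scal
end

section
/- For every real number k and every natural number l, Σ_{b=0}^{⌊l/2⌋} ((−1)^b / (l−2b)!) · (k)_l · (2k+2b−1)_{l−2b} · (k−1/2)_b · (k−3/2)_{l−b} = (1/(2^{2l} · l!)) · (2k−3)_l · (2k−1)_{2l}. -/
lemma poch_zero (x : ℝ) : poch x 0 = 1 := by simp [poch]

noncomputable def tt (k : ℝ) (l b : ℕ) : ℝ :=
  ((-1) ^ b / ((l - 2 * b).factorial : ℝ)) * poch k l *
    poch (2 * k + 2 * b - 1) (l - 2 * b) * poch (k - 1 / 2) b * poch (k - 3 / 2) (l - b)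

noncomputable def G (k : ℝ) (l b : ℕ) : ℝ :=
  if l + 1 ≤ 2 * b then 0 else
  (-1) ^ b * (-2 * b * (k + l) * (b + k - 1) * (2 * k + 2 * l - 3 - 2 * b)) /
    ((l + 1) * ((l + 1 - 2 * b).factorial : ℝ)) * poch k l *
    poch (2 * k + 2 * b - 1) (l - 2 * b) * poch (k - 1 / 2) b * poch (k - 3 / 2) (l - b)

noncomputable def rho (k : ℝ) (l : ℕ) : ℝ :=
  (2 * k + l - 3) * (2 * k + 2 * l - 1) * (k + l) / (2 * (l + 1))

lemma tval (k : ℝ) (n b : ℕ) :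
    tt k (n + 2 * b) b = ((-1) ^ b / (n.factorial : ℝ)) * poch k (n + 2 * b) *
      poch (2 * k + 2 * b - 1) n * poch (k - 1 / 2) b * poch (k - 3 / 2) (n + b) := by
  unfold tt
  rw [show n + 2 * b - 2 * b = n by omega, show n + 2 * b - b = n + b by omega]

lemma Gval (k : ℝ) (n b : ℕ) :
    G k (n + 2 * b) b = (-1) ^ b * (-2 * b * (k + (n + 2 * b : ℕ)) * (b + k - 1) *
        (2 * k + 2 * (n + 2 * b : ℕ) - 3 - 2 * b)) /
      (((n + 2 * b : ℕ) + 1) * ((n + 1).factorial : ℝ)) * poch k (n + 2 * b) *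
      poch (2 * k + 2 * b - 1) n * poch (k - 1 / 2) b * poch (k - 3 / 2) (n + b) := by
  unfold G
  rw [if_neg (by omega), show n + 2 * b + 1 - 2 * b = n + 1 by omega,
    show n + 2 * b - 2 * b = n by omega, show n + 2 * b - b = n + b by omega]

lemma Gzero (k : ℝ) (l : ℕ) : G k l 0 = 0 := by
  unfold G
  split <;> simp

lemma Gtop (k : ℝ) (m : ℕ) : G k (2 * m) (m + 1) = 0 := by
  unfold G
  rw [if_pos (by omega)]

lemma poch_one (x : ℝ) : poch x 1 = x := by simp [poch]

lemma lemB (k : ℝ) (b : ℕ) :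
    tt k (1 + 2 * b) b = rho k (2 * b) * tt k (0 + 2 * b) b - G k (0 + 2 * b) b := by
  rw [tval, tval, Gval, rho]
  rw [show (1 : ℕ) + b = b + 1 by omega, poch_succ,
    show (1 : ℕ) + 2 * b = 2 * b + 1 by omega, poch_succ]
  simp only [Nat.zero_add, Nat.factorial_one, Nat.factorial_zero, poch_zero, poch_succ]
  push_cast
  have h1 : (2 * (b : ℝ) + 1) ≠ 0 := by positivity
  field_simp
  ring

lemma lemC (k : ℝ) (b : ℕ) :
    tt k (2 + 2 * b) b + tt k (0 + 2 * (b + 1)) (b + 1)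
      = rho k (1 + 2 * b) * tt k (1 + 2 * b) b - G k (1 + 2 * b) b := by
  rw [tval, tval, tval, Gval, rho]
  rw [show (2 : ℕ) + 2 * b = (1 + 2 * b) + 1 by omega,
    show (0 : ℕ) + 2 * (b + 1) = (1 + 2 * b) + 1 by omega,
    show (2 : ℕ) + b = (1 + b) + 1 by omega,
    show (0 : ℕ) + (b + 1) = 1 + b by omega]
  simp only [poch_succ, poch_zero, Nat.factorial]
  push_cast
  have h1 : (1 + 2 * (b : ℝ) + 1) ≠ 0 := by positivity
  field_simp
  ring

lemma lemA (k : ℝ) (b c : ℕ) :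
    tt k ((c + 3) + 2 * b) b
      = rho k ((c + 2) + 2 * b) * tt k ((c + 2) + 2 * b) b
        + G k (c + 2 * (b + 1)) (b + 1) - G k ((c + 2) + 2 * b) b := by
  rw [tval k (c+3) b, tval k (c+2) b, Gval k c (b+1), Gval k (c+2) b, rho]
  rw [show c + 2 * (b + 1) = (c + 2) + 2 * b by omega]
  have f3 : (c+3).factorial = (c+3) * ((c+2) * (c+1).factorial) := by
    rw [show c+3 = c+2+1 from by omega, Nat.factorial_succ, show c+2 = c+1+1 from by omega,
      Nat.factorial_succ]
  have f2 : (c+2).factorial = (c+2) * (c+1).factorial := by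
    rw [show c+2 = c+1+1 from by omega, Nat.factorial_succ]
  rw [f3, f2]
  rw [show (c+3) + 2*b = ((c+2)+2*b)+1 by omega]
  rw [show (c+3) + b = ((c+(b+1))+1)+1 by omega, show (c+2) + b = (c+(b+1))+1 by omega]
  rw [show (c+3 : ℕ) = (c+1)+2 by omega]
  rw [poch_two_left (2*k+2*(b:ℝ)-1) (c+1), poch_two_left (2*k+2*(b:ℝ)-1) c]
  rw [show (2*k + 2*(((b+1 : ℕ)):ℝ) - 1) = 2*k + 2*(b:ℝ) - 1 + 2 by push_cast; ring]
  simp only [poch_succ, poch_zero]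
  push_cast
  have hf : ((c+1).factorial : ℝ) ≠ 0 := by positivity
  have h1 : ((c:ℝ) + 2 + 2*b + 1) ≠ 0 := by positivity
  field_simp
  ring

lemma stepL (k : ℝ) (l : ℕ) :
    ∑ b ∈ Finset.range ((l + 1) / 2 + 1), tt k (l + 1) b
      = rho k l * ∑ b ∈ Finset.range (l / 2 + 1), tt k l b := by
  rcases Nat.even_or_odd l with ⟨m, hm⟩ | ⟨m, hm⟩
  · -- l = 2 * m
    have hl : l = 2 * m := by omega
    subst hl
    rw [show (2 * m + 1) / 2 + 1 = m + 1 by omega, show (2 * m) / 2 + 1 = m + 1 by omega,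
      Finset.mul_sum]
    have key : ∀ b ∈ Finset.range (m + 1),
        tt k (2 * m + 1) b
          = rho k (2 * m) * tt k (2 * m) b + (G k (2 * m) (b + 1) - G k (2 * m) b) := by
      intro b hb
      simp only [Finset.mem_range] at hb
      rcases lt_or_ge b m with h | h
      · have hA := lemA k b (2 * m - 2 * b - 2)
        rw [show 2 * m - 2 * b - 2 + 3 + 2 * b = 2 * m + 1 by omega,
          show 2 * m - 2 * b - 2 + 2 + 2 * b = 2 * m by omega,
          show 2 * m - 2 * b - 2 + 2 * (b + 1) = 2 * m by omega] at hA
        rw [hA]; ring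
      · have hb' : b = m := by omega
        rw [hb']
        have hB := lemB k m
        rw [show 1 + 2 * m = 2 * m + 1 by omega, show 0 + 2 * m = 2 * m by omega] at hB
        rw [hB, Gtop k m]; ring
    rw [Finset.sum_congr rfl key, Finset.sum_add_distrib,
      Finset.sum_range_sub (fun b => G k (2 * m) b), Gtop, Gzero]
    ring
  · -- l = 2 * m + 1
    subst hm
    rw [show (2 * m + 1 + 1) / 2 + 1 = m + 2 by omega,
      show (2 * m + 1) / 2 + 1 = m + 1 by omega,
      Finset.sum_range_succ, Finset.sum_range_succ, Finset.sum_range_succ (n := m),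
      mul_add, Finset.mul_sum]
    have key : ∀ b ∈ Finset.range m,
        tt k (2 * m + 1 + 1) b
          = rho k (2 * m + 1) * tt k (2 * m + 1) b
            + (G k (2 * m + 1) (b + 1) - G k (2 * m + 1) b) := by
      intro b hb
      simp only [Finset.mem_range] at hb
      have hA := lemA k b (2 * m + 1 - 2 * b - 2)
      rw [show 2 * m + 1 - 2 * b - 2 + 3 + 2 * b = 2 * m + 1 + 1 by omega,
        show 2 * m + 1 - 2 * b - 2 + 2 + 2 * b = 2 * m + 1 by omega,
        show 2 * m + 1 - 2 * b - 2 + 2 * (b + 1) = 2 * m + 1 by omega] at hA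
      rw [hA]; ring
    rw [Finset.sum_congr rfl key, Finset.sum_add_distrib,
      Finset.sum_range_sub (fun b => G k (2 * m + 1) b), Gzero]
    have hC := lemC k m
    rw [show 2 + 2 * m = 2 * m + 1 + 1 by omega, show 0 + 2 * (m + 1) = 2 * m + 1 + 1 by omega,
      show 1 + 2 * m = 2 * m + 1 by omega] at hC
    linarith [hC]

/-- `Σ_{b=0}^{⌊l/2⌋} ((−1)^b/(l−2b)!)·(k)_l·(2k+2b−1)_{l−2b}·(k−1/2)_b·(k−3/2)_{l−b}
  = (1/(2^{2l}·l!))·(2k−3)_l·(2k−1)_{2l}`. -/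
theorem pochhammer_sum_eval (k : ℝ) (l : ℕ) :
    ∑ b ∈ Finset.range (l / 2 + 1),
        ((-1) ^ b / ((l - 2 * b).factorial : ℝ)) * poch k l *
          poch (2 * k + 2 * b - 1) (l - 2 * b) * poch (k - 1 / 2) b *
          poch (k - 3 / 2) (l - b)
      = 1 / (2 ^ (2 * l) * (l.factorial : ℝ)) * poch (2 * k - 3) l *
          poch (2 * k - 1) (2 * l) := by
  induction l with
  | zero => norm_num [Finset.sum_range_one, poch_zero]
  | succ l ih =>
    have ih' : ∑ b ∈ Finset.range (l / 2 + 1), tt k l b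
        = 1 / (2 ^ (2 * l) * (l.factorial : ℝ)) * poch (2 * k - 3) l *
            poch (2 * k - 1) (2 * l) := ih
    have h2 : ∑ b ∈ Finset.range ((l + 1) / 2 + 1), tt k (l + 1) b
        = 1 / (2 ^ (2 * (l + 1)) * ((l + 1).factorial : ℝ)) * poch (2 * k - 3) (l + 1) *
            poch (2 * k - 1) (2 * (l + 1)) := by
      rw [stepL, ih', rho, show 2 * (l + 1) = 2 * l + 1 + 1 by omega]
      simp only [poch_succ, Nat.factorial_succ, pow_succ]
      push_cast
      have hf : ((l.factorial : ℝ)) ≠ 0 := by positivity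
      have h1 : ((l : ℝ) + 1) ≠ 0 := by positivity
      have h0 : ((2 : ℝ)) ^ (2 * l) ≠ 0 := by positivity
      field_simp
      ring
    exact h2
end
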